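/- Let R be a PID and n ≥ 2. In the quiver with relations (Q, ρ) of the stratification A_n of S^2 (n points P_1,…,P_n on the equator, n equator arcs E_1,…,E_n, two hemispheres H_1, H_2), the Hom-module between I_S and I_T is free of rank 1 exactly in the following cases and zero otherwise: Hom(I_{H_j}, I_{H_j}); Hom(I_{H_j}, I_{E_i}) and Hom(I_{H_j}, I_{P_i}) for all i, j; Hom(I_{E_i}, I_{E_i}); Hom(I_{E_i}, I_{P_i}); Hom(I_{E_i}, I_{P_{i−1}}) (indices mod n); Hom(I_{P_i}, I_{P_i}). -/

import Mathlib

open CategoryTheory CategoryTheory.Limits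

/-- The vertices of the quiver of the stratification `Aₙ` of the 2-sphere: two hemispheres
`H j` (`j : Fin 2`), `n` equator arcs `E i` and `n` points `P i` (`i : Fin n`). -/
inductive VA (n : ℕ) : Type
  | H (j : Fin 2) | E (i : Fin n) | P (i : Fin n)
  deriving DecidableEq

namespace VA

variable {n : ℕ} [NeZero n]

/-- The closure relation of `Aₙ`: `P i` lies in the closure of the arcs `E i` and
`E (i+1)` (indices mod `n`) and of both hemispheres; each arc lies in the closure of both
hemispheres. -/
def rel : VA n → VA n → Prop
  | H j, H j' => j = j'
  | E i, E i' => i = i'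
  | P i, P i' => i = i'
  | E _, H _ => True
  | P _, H _ => True
  | P i, E i' => i' = i ∨ i' = i + 1
  | _, _ => False

/-- Identifying all parallel paths, the category of representations of the quiver with
relations of `Aₙ` is the category of functors on this preorder. -/
instance : Preorder (VA n) where
  le := rel
  le_refl a := by cases a <;> simp [rel]
  le_trans a b c hab hbc := by
    cases a <;> cases b <;> cases c <;> simp_all [rel]

lemma P_le_E_self (i : Fin n) : (P i : VA n) ≤ E i := Or.inl rfl
lemma P_le_E_next (i : Fin n) : (P i : VA n) ≤ E (i + 1) := Or.inr rfl
lemma P_le_H (i : Fin n) (j : Fin 2) : (P i : VA n) ≤ H j := trivial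
lemma E_le_H (i : Fin n) (j : Fin 2) : (E i : VA n) ≤ H j := trivial

end VA

open VA

variable (R : Type) [CommRing R] (n : ℕ) [NeZero n]

/-- The category of representations of the quiver with relations of `Aₙ`. -/
abbrev RepA := VA n ⥤ ModuleCat.{0} R

/-- The representation `I_v`: stalk `R` at every vertex `x ≤ v` (with identity arrows
among those) and `0` elsewhere; it corresponds to the extension by zero of the constant
sheaf on the closure of the stratum `v`. -/
def IRep (v : VA n) : RepA R n where
  obj x := ModuleCat.of R (PLift (x ≤ v) → R)
  map {x y} f := ModuleCat.ofHom
    { toFun := fun g h => g ⟨(leOfHom f).trans h.down⟩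
      map_add' := fun _ _ => rfl
      map_smul' := fun _ _ => rfl }

/-- The constant representation `C`. -/
def CRep : RepA R n := (Functor.const (VA n)).obj (ModuleCat.of R R)

/-- The canonical generator of `Hom(I_v, I_w)` for `w ≤ v`. -/
def canMor {v w : VA n} (h : w ≤ v) : IRep R n v ⟶ IRep R n w where
  app x := ModuleCat.ofHom
    { toFun := fun g hw => g ⟨hw.down.trans h⟩
      map_add' := fun _ _ => rfl
      map_smul' := fun _ _ => rfl }

/-- The canonical morphism `C ⟶ I_v`. -/
def unitMor (v : VA n) : CRep R n ⟶ IRep R n v where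
  app x := ModuleCat.ofHom
    { toFun := fun r _ => r
      map_add' := fun _ _ => rfl
      map_smul' := fun _ _ => rfl }


section Aux

variable {R n}

/-- Key naturality computation: any component of `η` is determined by its component at `w`. -/
lemma key_nat {v w : VA n} (η : IRep R n v ⟶ IRep R n w) (x : VA n)
    (g : (IRep R n v).obj x) (hw : PLift (x ≤ w)) :
    η.app x g hw =
      η.app w ((IRep R n v).map (homOfLE hw.down) g) ⟨le_refl w⟩ := by
  have h := η.naturality (homOfLE hw.down)
  have h2 := congrArg (fun (f : (IRep R n v).obj x ⟶ (IRep R n w).obj w) => f g ⟨le_refl w⟩) h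
  rw [ConcreteCategory.comp_apply, ConcreteCategory.comp_apply] at h2
  exact h2.symm

lemma hom_eq_zero {v w : VA n} (hwv : ¬ w ≤ v) (η : IRep R n v ⟶ IRep R n w) : η = 0 := by
  ext x g
  funext hw
  rw [show ((0 : IRep R n v ⟶ IRep R n w).app x g hw) = 0 from rfl]
  rw [key_nat η x g hw]
  have hz : (IRep R n v).map (homOfLE hw.down) g = 0 := by
    funext h'
    exact absurd h'.down hwv
  rw [hz, map_zero]
  rfl

/-- The linear equivalence `Hom(I_v, I_w) ≃ R` when `w ≤ v`. -/
noncomputable def homEquiv {v w : VA n} (h : w ≤ v) :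
    (IRep R n v ⟶ IRep R n w) ≃ₗ[R] R where
  toFun η := η.app w (fun _ => (1 : R)) ⟨le_refl w⟩
  map_add' η η' := rfl
  map_smul' r η := rfl
  invFun r := r • canMor R n h
  left_inv η := by
    ext x g
    funext hw
    have key := key_nat η x g hw
    have hg : (IRep R n v).map (homOfLE hw.down) g
        = g ⟨hw.down.trans h⟩ • (fun _ => (1 : R)) := by
      funext h'
      show g _ = g ⟨hw.down.trans h⟩ * 1
      rw [mul_one]
    rw [hg] at key
    change η.app x g hw = (η.app w).hom (g ⟨hw.down.trans h⟩ • (fun _ => (1 : R))) ⟨le_refl w⟩ at key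
    replace key := key.trans (congrFun (map_smul (η.app w).hom (g ⟨hw.down.trans h⟩) (fun _ => (1 : R))) ⟨le_refl w⟩)
    show (_ • canMor R n h).app x g hw = η.app x g hw
    rw [key]
    exact mul_comm _ _
  right_inv r := by
    show (r • canMor R n h).app w (fun _ => (1 : R)) ⟨le_refl w⟩ = r
    show r * ((canMor R n h).app w (fun _ => (1 : R)) ⟨le_refl w⟩) = r
    show r * 1 = r
    rw [mul_one]

lemma cond_iff {v w : VA n} :
    ((∃ j, v = H j ∧ w = H j) ∨
        (∃ i j, v = H j ∧ w = E i) ∨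
        (∃ i j, v = H j ∧ w = P i) ∨
        (∃ i, v = E i ∧ w = E i) ∨
        (∃ i, v = E i ∧ w = P i) ∨
        (∃ i, v = E i ∧ w = P (i - 1)) ∨
        (∃ i, v = P i ∧ w = P i)) ↔ w ≤ v := by
  show _ ↔ VA.rel w v
  cases v <;> cases w <;> simp_all [VA.rel]
  constructor
  · rintro (rfl | rfl)
    · exact Or.inl rfl
    · exact Or.inr (sub_add_cancel _ _).symm
  · rintro (rfl | rfl)
    · exact Or.inl rfl
    · exact Or.inr (add_sub_cancel_right _ _).symm

end Aux

/-- Let `R` be a PID and `n ≥ 2`.  In the quiver with relations of the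
stratification `Aₙ` of `S²`, the `R`-module `Hom(I_S, I_T)` is free of rank `1` exactly in
the cases `Hom(I_{H_j}, I_{H_j})`, `Hom(I_{H_j}, I_{E_i})`, `Hom(I_{H_j}, I_{P_i})` (all
`i, j`), `Hom(I_{E_i}, I_{E_i})`, `Hom(I_{E_i}, I_{P_i})`, `Hom(I_{E_i}, I_{P_{i−1}})`
(indices mod `n`), and `Hom(I_{P_i}, I_{P_i})`, and vanishes otherwise. -/
theorem formality_spheres_stmt15 (R : Type) [CommRing R] [IsDomain R]
    [IsPrincipalIdealRing R] (n : ℕ) [NeZero n] (hn : 2 ≤ n) :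
    ∀ v w : VA n,
      (((∃ j, v = H j ∧ w = H j) ∨
        (∃ i j, v = H j ∧ w = E i) ∨
        (∃ i j, v = H j ∧ w = P i) ∨
        (∃ i, v = E i ∧ w = E i) ∨
        (∃ i, v = E i ∧ w = P i) ∨
        (∃ i, v = E i ∧ w = P (i - 1)) ∨
        (∃ i, v = P i ∧ w = P i)) →
        Nonempty ((IRep R n v ⟶ IRep R n w) ≃ₗ[R] R)) ∧
      ((¬ ((∃ j, v = H j ∧ w = H j) ∨
        (∃ i j, v = H j ∧ w = E i) ∨
        (∃ i j, v = H j ∧ w = P i) ∨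
        (∃ i, v = E i ∧ w = E i) ∨
        (∃ i, v = E i ∧ w = P i) ∨
        (∃ i, v = E i ∧ w = P (i - 1)) ∨
        (∃ i, v = P i ∧ w = P i))) →
        Subsingleton (IRep R n v ⟶ IRep R n w)) := by
  intro v w
  constructor
  · intro hcond
    exact ⟨homEquiv (cond_iff.mp hcond)⟩
  · intro hcond
    have hz := fun η => hom_eq_zero (R := R) (n := n)
      (fun h => hcond (cond_iff.mpr h)) η
    exact ⟨fun a b => (hz a).trans (hz b).symm⟩
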